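/- Let X₁, X₂, … be independent geometric random variables on the positive integers with Xᵢ having parameter 1/i, and let A = min{n : X₁ + ⋯ + Xₙ ≥ T} for a positive integer T. Then E[A] ≤ (⌈√T⌉ − 1) + E[min{n : X′₁ + ⋯ + X′ₙ ≥ T}], where X′₁, X′₂, … are i.i.d. geometric variables with parameter 1/⌈√T⌉. -/

import Mathlib

open MeasureTheory ProbabilityTheory Filter


/-- geometric telescoping sum -/
lemma geomAux_sum_real (q : ℝ) (c : ℕ) :
    ∑ k ∈ Finset.Icc 1 c, (1 - q) ^ (k - 1) * q = 1 - (1 - q) ^ c := by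
  induction c with
  | zero => simp
  | succ c ih =>
    rw [Finset.sum_Icc_succ_top (by omega), ih]
    have hc : c + 1 - 1 = c := by omega
    rw [hc, pow_succ]
    ring

/-- CDF of a geometric variable with parameter `q ∈ (0,1]`, plus no mass at `0`. -/
lemma geomAux_cdf {Ω : Type*} [MeasurableSpace Ω] (μ : Measure Ω) [IsProbabilityMeasure μ]
    (Y : Ω → ℕ) (hY : Measurable Y) (q : ℝ) (hq0 : 0 < q) (hq1 : q ≤ 1)
    (h : ∀ k, 1 ≤ k → μ {ω | Y ω = k} = ENNReal.ofReal ((1 - q) ^ (k - 1) * q)) :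
    μ {ω | Y ω = 0} = 0 ∧
      ∀ c : ℕ, μ {ω | Y ω ≤ c} = ENNReal.ofReal (1 - (1 - q) ^ c) := by
  have hr0 : (0:ℝ) ≤ 1 - q := by linarith
  have hr1 : 1 - q < 1 := by linarith
  have hsum : ∀ c : ℕ, ∑ k ∈ Finset.Icc 1 c, μ {ω | Y ω = k}
      = ENNReal.ofReal (1 - (1 - q) ^ c) := by
    intro c
    have hnn : ∀ k ∈ Finset.Icc 1 c, 0 ≤ (1 - q) ^ (k - 1) * q := by
      intro k _
      exact mul_nonneg (pow_nonneg hr0 _) hq0.le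
    calc ∑ k ∈ Finset.Icc 1 c, μ {ω | Y ω = k}
        = ∑ k ∈ Finset.Icc 1 c, ENNReal.ofReal ((1 - q) ^ (k - 1) * q) := by
          refine Finset.sum_congr rfl fun k hk => ?_
          exact h k (Finset.mem_Icc.mp hk).1
      _ = ENNReal.ofReal (∑ k ∈ Finset.Icc 1 c, (1 - q) ^ (k - 1) * q) := by
          rw [ENNReal.ofReal_sum_of_nonneg hnn]
      _ = ENNReal.ofReal (1 - (1 - q) ^ c) := by
          congr 1
          exact geomAux_sum_real q c
  have hle : ∀ c : ℕ, μ {ω | Y ω ≤ c}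
      = μ {ω | Y ω = 0} + ENNReal.ofReal (1 - (1 - q) ^ c) := by
    intro c
    have hset : {ω | Y ω ≤ c} = ⋃ k ∈ Finset.range (c + 1), {ω | Y ω = k} := by
      ext ω; simp [Nat.lt_succ_iff]
    have hdisj : Set.PairwiseDisjoint ↑(Finset.range (c + 1))
        (fun k => {ω | Y ω = k}) := by
      intro a _ b _ hab
      exact Set.disjoint_left.mpr fun ω ha hb => hab (ha.symm.trans hb)
    have hmeas : ∀ k ∈ Finset.range (c + 1), MeasurableSet {ω | Y ω = k} :=
      fun k _ => hY (measurableSet_singleton k)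
    rw [hset, measure_biUnion_finset hdisj hmeas]
    have hins : Finset.range (c + 1) = insert 0 (Finset.Icc 1 c) := by
      ext n; simp [Finset.mem_range, Finset.mem_Icc]; omega
    rw [hins, Finset.sum_insert (by simp), hsum c]
  have hzero : μ {ω | Y ω = 0} = 0 := by
    have hbound : ∀ c : ℕ, μ {ω | Y ω = 0} ≤ ENNReal.ofReal ((1 - q) ^ c) := by
      intro c
      have h1 : μ {ω | Y ω = 0} + ENNReal.ofReal (1 - (1 - q) ^ c) ≤ 1 := by
        rw [← hle c]; exact prob_le_one
      have h2 : μ {ω | Y ω = 0} ≤ 1 - ENNReal.ofReal (1 - (1 - q) ^ c) :=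
        ENNReal.le_sub_of_add_le_right ENNReal.ofReal_ne_top h1
      refine h2.trans (le_of_eq ?_)
      rw [show (1:ENNReal) = ENNReal.ofReal 1 by simp,
        ← ENNReal.ofReal_sub _ (by nlinarith [pow_le_one₀ hr0 hr1.le (n := c)])]
      congr 1; ring
    have htend : Tendsto (fun c : ℕ => ENNReal.ofReal ((1 - q) ^ c)) atTop (nhds 0) := by
      have := tendsto_pow_atTop_nhds_zero_of_lt_one hr0 hr1
      simpa using ENNReal.tendsto_ofReal this
    simpa using ge_of_tendsto htend (Eventually.of_forall hbound)
  refine ⟨hzero, fun c => ?_⟩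
  rw [hle c, hzero, zero_add]

/-- Splitting the CDF of a sum of independent `ℕ`-valued variables. -/
lemma geomAux_split {Ω : Type*} [MeasurableSpace Ω] (μ : Measure Ω)
    (X : ℕ → Ω → ℕ) (hmeas : ∀ i, Measurable (X i))
    (hindep : iIndepFun X μ)
    (s : Finset ℕ) (j : ℕ) (hj : j ∉ s) (t : ℕ) :
    μ {ω | ∑ i ∈ insert j s, X i ω < t}
      = ∑ k ∈ Finset.range t, μ {ω | X j ω = k} * μ {ω | ∑ i ∈ s, X i ω < t - k} := by
  classical
  have hindepf : IndepFun (∑ i ∈ s, X i) (X j) μ :=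
    hindep.indepFun_finsetSum_of_notMem hmeas hj
  have hset : {ω | ∑ i ∈ insert j s, X i ω < t}
      = ⋃ k ∈ Finset.range t, ({ω | X j ω = k} ∩ {ω | ∑ i ∈ s, X i ω < t - k}) := by
    ext ω
    simp only [Set.mem_setOf_eq, Set.mem_iUnion, Finset.mem_range, Set.mem_inter_iff,
      Finset.sum_insert hj]
    constructor
    · intro hlt
      exact ⟨X j ω, by omega, rfl, by omega⟩
    · rintro ⟨k, hk, hXk, hS⟩
      omega
  rw [hset, measure_biUnion_finset ?disj ?meas]
  case disj =>
    intro a _ b _ hab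
    exact Set.disjoint_left.mpr fun ω ha hb => hab (ha.1.symm.trans hb.1)
  case meas =>
    intro k _
    exact ((hmeas j) (measurableSet_singleton k)).inter
      ((Finset.measurable_sum s fun i _ => hmeas i) measurableSet_Iio)
  refine Finset.sum_congr rfl fun k _ => ?_
  have h1 : {ω | X j ω = k} ∩ {ω | ∑ i ∈ s, X i ω < t - k}
      = (∑ i ∈ s, X i) ⁻¹' (Set.Iio (t - k)) ∩ (X j) ⁻¹' {k} := by
    ext ω
    simp [Set.mem_inter_iff, and_comm, Finset.sum_apply]
  have e1 : (X j) ⁻¹' {k} = {ω | X j ω = k} := by ext ω; simp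
  have e2 : (∑ i ∈ s, X i) ⁻¹' (Set.Iio (t - k)) = {ω | ∑ i ∈ s, X i ω < t - k} := by
    ext ω; simp [Finset.sum_apply]
  rw [h1, hindepf.measure_inter_preimage_eq_mul _ _ measurableSet_Iio
    (measurableSet_singleton k), mul_comm, e1, e2]

/-- lintegral of an `ℕ`-valued function as a sum of tail probabilities. -/
lemma geomAux_lintegral_nat {Ω : Type*} [MeasurableSpace Ω] (μ : Measure Ω)
    (f : Ω → ℕ) (hf : Measurable f) :
    ∫⁻ ω, (f ω : ENNReal) ∂μ = ∑' n : ℕ, μ {ω | n < f ω} := by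
  have hpt : ∀ ω, (f ω : ENNReal)
      = ∑' n : ℕ, Set.indicator {ω | n < f ω} (fun _ => (1:ENNReal)) ω := by
    intro ω
    have : ∀ n : ℕ, Set.indicator {ω | n < f ω} (fun _ => (1:ENNReal)) ω
        = if n ∈ Finset.range (f ω) then (1:ENNReal) else 0 := by
      intro n
      simp [Set.indicator, Finset.mem_range]
    rw [tsum_congr this, tsum_eq_sum (s := Finset.range (f ω))
      (fun n hn => by simp [hn]),
      Finset.sum_congr rfl (fun n hn => if_pos hn), Finset.sum_const, Finset.card_range]
    simp
  calc ∫⁻ ω, (f ω : ENNReal) ∂μ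
      = ∫⁻ ω, ∑' n : ℕ, Set.indicator {ω | n < f ω} (fun _ => (1:ENNReal)) ω ∂μ := by
        exact lintegral_congr hpt
    _ = ∑' n : ℕ, ∫⁻ ω, Set.indicator {ω | n < f ω} (fun _ => (1:ENNReal)) ω ∂μ := by
        refine lintegral_tsum fun n => ?_
        exact (measurable_const.indicator (hf measurableSet_Ioi)).aemeasurable
    _ = ∑' n : ℕ, μ {ω | n < f ω} := by
        refine tsum_congr fun n => ?_
        rw [lintegral_indicator (show MeasurableSet {ω | n < f ω} from hf measurableSet_Ioi)]
        simp

/-- measurability of a pointwise sInf of a ℕ-indexed family of conditions -/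
lemma geomAux_measurable_sInf {Ω : Type*} [MeasurableSpace Ω] (P : ℕ → Ω → Prop)
    (hP : ∀ n, MeasurableSet {ω | P n ω}) (f : Ω → ℕ)
    (hf : ∀ ω, f ω = sInf {n | P n ω}) : Measurable f := by
  apply measurable_to_countable'
  intro x
  have : f ⁻¹' {x} =
      ({ω | P x ω} ∩ ⋂ (y : ℕ) (_ : y < x), {ω | P y ω}ᶜ) ∪
      ({ω | x = 0} ∩ ⋂ (y : ℕ), {ω | P y ω}ᶜ) := by
    ext ω
    simp only [Set.mem_preimage, Set.mem_singleton_iff, Set.mem_union, Set.mem_inter_iff,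
      Set.mem_iInter, Set.mem_compl_iff, Set.mem_setOf_eq, hf]
    constructor
    · intro h
      by_cases hne : {n | P n ω}.Nonempty
      · left
        have hmem := Nat.sInf_mem hne
        rw [h] at hmem
        refine ⟨hmem, fun y hy hPy => ?_⟩
        have := Nat.sInf_le (s := {n | P n ω}) hPy
        omega
      · right
        rw [Set.not_nonempty_iff_eq_empty] at hne
        constructor
        · rw [← h, hne, Nat.sInf_empty]
        · intro y hy; exact absurd (show y ∈ {n | P n ω} from hy) (by simp [hne])
    · rintro (⟨hx, hmin⟩ | ⟨hx0, hall⟩)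
      · refine le_antisymm (Nat.sInf_le hx) ?_
        by_contra hlt
        push_neg at hlt
        have hmem := Nat.sInf_mem (s := {n | P n ω}) ⟨x, hx⟩
        exact hmin _ hlt hmem
      · have : {n | P n ω} = ∅ := by
          ext n; simp only [Set.mem_setOf_eq, Set.mem_empty_iff_false, iff_false]
          exact hall n
        rw [this, Nat.sInf_empty, hx0]
  rw [this]
  refine ((hP x).inter (MeasurableSet.iInter fun y => MeasurableSet.iInter fun _ =>
    (hP y).compl)).union (MeasurableSet.inter ?_ (MeasurableSet.iInter fun y => (hP y).compl))
  by_cases h : x = 0 <;> simp [h]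

/-- Abel summation identity in `ℝ≥0∞` for antitone `g`. -/
lemma geomAux_abel (p g : ℕ → ENNReal) (hg : ∀ k, g (k + 1) ≤ g k) (t : ℕ) :
    ∑ k ∈ Finset.range (t + 1), p k * g k =
      (∑ k ∈ Finset.range (t + 1), p k) * g t +
      ∑ j ∈ Finset.range t, (∑ k ∈ Finset.range (j + 1), p k) * (g j - g (j + 1)) := by
  induction t with
  | zero => simp
  | succ t ih =>
    rw [Finset.sum_range_succ (f := fun k => p k * g k), ih,
      Finset.sum_range_succ (f := fun j => (∑ k ∈ Finset.range (j + 1), p k) * (g j - g (j + 1)))]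
    have key : (∑ k ∈ Finset.range (t + 1), p k) * g t + p (t + 1) * g (t + 1) =
        (∑ k ∈ Finset.range (t + 1 + 1), p k) * g (t + 1) +
        (∑ k ∈ Finset.range (t + 1), p k) * (g t - g (t + 1)) := by
      have h2 : g (t + 1) + (g t - g (t + 1)) = g t := add_tsub_cancel_of_le (hg t)
      calc (∑ k ∈ Finset.range (t + 1), p k) * g t + p (t + 1) * g (t + 1)
          = (∑ k ∈ Finset.range (t + 1), p k) * (g (t + 1) + (g t - g (t + 1)))
            + p (t + 1) * g (t + 1) := by rw [h2]
        _ = (∑ k ∈ Finset.range (t + 1), p k) * g (t + 1)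
            + (∑ k ∈ Finset.range (t + 1), p k) * (g t - g (t + 1))
            + p (t + 1) * g (t + 1) := by rw [mul_add]
        _ = ((∑ k ∈ Finset.range (t + 1), p k) + p (t + 1)) * g (t + 1)
            + (∑ k ∈ Finset.range (t + 1), p k) * (g t - g (t + 1)) := by
            rw [add_mul]; abel
        _ = _ := by rw [Finset.sum_range_succ p (t + 1)]
    calc (∑ k ∈ Finset.range (t + 1), p k) * g t +
          (∑ j ∈ Finset.range t, (∑ k ∈ Finset.range (j + 1), p k) * (g j - g (j + 1))) +
          p (t + 1) * g (t + 1)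
        = ((∑ k ∈ Finset.range (t + 1), p k) * g t + p (t + 1) * g (t + 1)) +
          ∑ j ∈ Finset.range t, (∑ k ∈ Finset.range (j + 1), p k) * (g j - g (j + 1)) := by abel
      _ = ((∑ k ∈ Finset.range (t + 1 + 1), p k) * g (t + 1) +
            (∑ k ∈ Finset.range (t + 1), p k) * (g t - g (t + 1))) +
          ∑ j ∈ Finset.range t, (∑ k ∈ Finset.range (j + 1), p k) * (g j - g (j + 1)) := by
          rw [key]
      _ = _ := by abel

/-- Abel comparison: if partial sums of `p` are dominated by those of `p'` and `g` antitone. -/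
lemma geomAux_abel_le (p p' g : ℕ → ENNReal) (hg : ∀ k, g (k + 1) ≤ g k)
    (hF : ∀ c, ∑ k ∈ Finset.range (c + 1), p k ≤ ∑ k ∈ Finset.range (c + 1), p' k) (t : ℕ) :
    ∑ k ∈ Finset.range t, p k * g k ≤ ∑ k ∈ Finset.range t, p' k * g k := by
  cases t with
  | zero => simp
  | succ t =>
    rw [geomAux_abel p g hg t, geomAux_abel p' g hg t]
    exact add_le_add (mul_le_mul_left (hF t) _)
      (Finset.sum_le_sum fun j _ => mul_le_mul_left (hF j) _)

lemma geomAux_psum {Ω : Type*} [MeasurableSpace Ω] (μ : Measure Ω) (Y : Ω → ℕ)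
    (hY : Measurable Y) (c : ℕ) :
    ∑ k ∈ Finset.range (c + 1), μ {ω | Y ω = k} = μ {ω | Y ω ≤ c} := by
  have hset : {ω | Y ω ≤ c} = ⋃ k ∈ Finset.range (c + 1), {ω | Y ω = k} := by
    ext ω; simp [Nat.lt_succ_iff]
  rw [hset, measure_biUnion_finset ?disj ?meas]
  case disj =>
    intro a _ b _ hab
    exact Set.disjoint_left.mpr fun ω ha hb => hab (ha.symm.trans hb)
  case meas => exact fun k _ => hY (measurableSet_singleton k)

/-- With `X i ∼ Geo(1/i)` independent and hitting time
`A = min{n : X 1 + ⋯ + X n ≥ T}`, we have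
`E[A] ≤ (⌈√T⌉ - 1) + E[A']` where `A'` is the hitting time of `T` for i.i.d.
geometric variables `X' i` with parameter `1/⌈√T⌉`. -/
theorem precision_hitting_time_domination_bound
    {Ω : Type*} [MeasurableSpace Ω] (μ : Measure Ω) [IsProbabilityMeasure μ]
    {Ω' : Type*} [MeasurableSpace Ω'] (μ' : Measure Ω') [IsProbabilityMeasure μ']
    (T : ℕ) (hT : 1 ≤ T)
    (X : ℕ → Ω → ℕ)
    (hmeas : ∀ i, Measurable (X i))
    (hindep : iIndepFun X μ)
    (hgeom : ∀ i, 1 ≤ i → ∀ k, 1 ≤ k →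
      μ {ω | X i ω = k} =
        ENNReal.ofReal ((1 - 1 / (i : ℝ)) ^ (k - 1) * (1 / (i : ℝ))))
    (A : Ω → ℕ)
    (hA : ∀ ω, A ω = sInf {n : ℕ | T ≤ ∑ i ∈ Finset.Icc 1 n, X i ω})
    (X' : ℕ → Ω' → ℕ)
    (hmeas' : ∀ i, Measurable (X' i))
    (hiid' : iIndepFun X' μ')
    (hgeom' : ∀ i k, 1 ≤ k →
      μ' {ω | X' i ω = k} =
        ENNReal.ofReal ((1 - 1 / (⌈Real.sqrt T⌉₊ : ℝ)) ^ (k - 1) *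
          (1 / (⌈Real.sqrt T⌉₊ : ℝ))))
    (A' : Ω' → ℕ)
    (hA' : ∀ ω, A' ω = sInf {n : ℕ | T ≤ ∑ i ∈ Finset.Icc 1 n, X' i ω}) :
    ∫ ω, (A ω : ℝ) ∂μ ≤ ((⌈Real.sqrt T⌉₊ : ℝ) - 1) + ∫ ω, (A' ω : ℝ) ∂μ' := by
  classical
  set m := ⌈Real.sqrt T⌉₊ with hm_def
  have hm1 : 1 ≤ m := by
    rw [hm_def, Nat.one_le_ceil_iff]
    exact Real.sqrt_pos.mpr (by exact_mod_cast hT)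
  -- CDF facts
  have hq : ∀ i : ℕ, 1 ≤ i → 0 < 1 / (i : ℝ) ∧ 1 / (i : ℝ) ≤ 1 := by
    intro i hi
    have h1 : (1:ℝ) ≤ (i:ℝ) := by exact_mod_cast hi
    constructor
    · positivity
    · rw [div_le_one (by linarith)]; exact h1
  have hXfacts : ∀ i : ℕ, 1 ≤ i → μ {ω | X i ω = 0} = 0 ∧
      ∀ c : ℕ, μ {ω | X i ω ≤ c} = ENNReal.ofReal (1 - (1 - 1 / (i:ℝ)) ^ c) :=
    fun i hi => geomAux_cdf μ (X i) (hmeas i) _ (hq i hi).1 (hq i hi).2 (hgeom i hi)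
  have hX'facts : ∀ i : ℕ, μ' {ω | X' i ω = 0} = 0 ∧
      ∀ c : ℕ, μ' {ω | X' i ω ≤ c} = ENNReal.ofReal (1 - (1 - 1 / (m:ℝ)) ^ c) :=
    fun i => geomAux_cdf μ' (X' i) (hmeas' i) _ (hq m hm1).1 (hq m hm1).2 (hgeom' i)
  -- CDF comparison
  have hcomp : ∀ i : ℕ, m ≤ i → ∀ j : ℕ, ∀ c : ℕ,
      ∑ k ∈ Finset.range (c + 1), μ {ω | X i ω = k}
        ≤ ∑ k ∈ Finset.range (c + 1), μ' {ω | X' j ω = k} := by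
    intro i hi j c
    have hi1 : 1 ≤ i := le_trans hm1 hi
    rw [geomAux_psum μ (X i) (hmeas i) c, geomAux_psum μ' (X' j) (hmeas' j) c,
      (hXfacts i hi1).2 c, (hX'facts j).2 c]
    apply ENNReal.ofReal_le_ofReal
    have hmi : (m:ℝ) ≤ (i:ℝ) := by exact_mod_cast hi
    have hm0 : (0:ℝ) < (m:ℝ) := by exact_mod_cast hm1
    have h1 : 1 / (i:ℝ) ≤ 1 / (m:ℝ) := one_div_le_one_div_of_le hm0 hmi
    have h2 : (0:ℝ) ≤ 1 - 1 / (m:ℝ) := by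
      have := (hq m hm1).2; linarith
    have h3 : (1 - 1/(m:ℝ)) ^ c ≤ (1 - 1/(i:ℝ)) ^ c :=
      pow_le_pow_left₀ h2 (by linarith) c
    linarith
  -- main comparison
  have key : ∀ n : ℕ, ∀ t : ℕ,
      μ {ω | ∑ i ∈ Finset.Ico m (m + n), X i ω < t}
        ≤ μ' {ω | ∑ i ∈ Finset.Icc 1 n, X' i ω < t} := by
    intro n
    induction n with
    | zero =>
      intro t
      simp only [Nat.add_zero, Finset.Ico_self, Finset.sum_empty]
      have he : Finset.Icc 1 0 = (∅ : Finset ℕ) := by decide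
      rw [he]
      simp only [Finset.sum_empty]
      rcases Nat.eq_zero_or_pos t with rfl | ht
      · simp
      · have h1 : {ω : Ω | 0 < t} = Set.univ := by ext ω; simpa using ht
        have h2 : {ω : Ω' | 0 < t} = Set.univ := by ext ω; simpa using ht
        rw [h1, h2, measure_univ, measure_univ]
    | succ n ih =>
      intro t
      have hins : Finset.Ico m (m + (n + 1)) = insert (m + n) (Finset.Ico m (m + n)) := by
        ext x; simp only [Finset.mem_Ico, Finset.mem_insert]; omega
      have hins' : Finset.Icc 1 (n + 1) = insert (n + 1) (Finset.Icc 1 n) := by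
        ext x; simp only [Finset.mem_Icc, Finset.mem_insert]; omega
      rw [hins, geomAux_split μ X hmeas hindep _ _ (by simp) t,
        hins', geomAux_split μ' X' hmeas' hiid' _ _ (by simp) t]
      calc ∑ k ∈ Finset.range t, μ {ω | X (m + n) ω = k}
              * μ {ω | ∑ i ∈ Finset.Ico m (m + n), X i ω < t - k}
          ≤ ∑ k ∈ Finset.range t, μ {ω | X (m + n) ω = k}
              * μ' {ω | ∑ i ∈ Finset.Icc 1 n, X' i ω < t - k} :=
            Finset.sum_le_sum fun k _ => mul_le_mul_right (ih (t - k)) _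
        _ ≤ ∑ k ∈ Finset.range t, μ' {ω | X' (n + 1) ω = k}
              * μ' {ω | ∑ i ∈ Finset.Icc 1 n, X' i ω < t - k} := by
            refine geomAux_abel_le _ _ _ ?_ ?_ t
            · intro k
              refine measure_mono fun ω hω => ?_
              simp only [Set.mem_setOf_eq] at hω ⊢
              omega
            · exact fun c => hcomp (m + n) (by omega) (n + 1) c
  -- measurability
  have hsummeas : ∀ s : Finset ℕ, Measurable (fun ω => ∑ i ∈ s, X i ω) :=
    fun s => Finset.measurable_sum s fun i _ => hmeas i
  have hsummeas' : ∀ s : Finset ℕ, Measurable (fun ω => ∑ i ∈ s, X' i ω) :=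
    fun s => Finset.measurable_sum s fun i _ => hmeas' i
  have hPmeas : ∀ n : ℕ, MeasurableSet {ω | T ≤ ∑ i ∈ Finset.Icc 1 n, X i ω} :=
    fun n => (hsummeas (Finset.Icc 1 n)) measurableSet_Ici
  have hAmeas : Measurable A := geomAux_measurable_sInf _ hPmeas A hA
  set B : Ω → ℕ := fun ω => sInf {n : ℕ | T ≤ ∑ i ∈ Finset.Ico m (m + n), X i ω} with hB_def
  have hBmeas : Measurable B :=
    geomAux_measurable_sInf _ (fun n => (hsummeas (Finset.Ico m (m + n))) measurableSet_Ici)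
      B (fun ω => rfl)
  have hA'meas : Measurable A' :=
    geomAux_measurable_sInf _ (fun n => (hsummeas' (Finset.Icc 1 n)) measurableSet_Ici) A' hA'
  -- a.e. goodness
  have hgood : ∀ᵐ ω ∂μ, ∀ i : ℕ, 1 ≤ i → 1 ≤ X i ω := by
    have h0 : ∀ᵐ ω ∂μ, ∀ i : ℕ, X (i + 1) ω ≠ 0 := by
      rw [ae_all_iff]
      intro i
      have := (hXfacts (i + 1) (by omega)).1
      rw [ae_iff]
      simpa using this
    filter_upwards [h0] with ω hω i hi
    obtain ⟨j, rfl⟩ : ∃ j, i = j + 1 := ⟨i - 1, by omega⟩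
    exact Nat.one_le_iff_ne_zero.mpr (hω j)
  have hgood' : ∀ᵐ ω ∂μ', ∀ i : ℕ, 1 ≤ i → 1 ≤ X' i ω := by
    have h0 : ∀ᵐ ω ∂μ', ∀ i : ℕ, X' (i + 1) ω ≠ 0 := by
      rw [ae_all_iff]
      intro i
      have := (hX'facts (i + 1)).1
      rw [ae_iff]
      simpa using this
    filter_upwards [h0] with ω hω i hi
    obtain ⟨j, rfl⟩ : ∃ j, i = j + 1 := ⟨i - 1, by omega⟩
    exact Nat.one_le_iff_ne_zero.mpr (hω j)
  -- a.e. bounds on the μ side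
  have hABae : ∀ᵐ ω ∂μ, A ω ≤ (m - 1) + B ω ∧ B ω ≤ T := by
    filter_upwards [hgood] with ω hω
    have hTmem : T ∈ {n : ℕ | T ≤ ∑ i ∈ Finset.Ico m (m + n), X i ω} := by
      have hcard : (Finset.Ico m (m + T)).card = T := by
        rw [Nat.card_Ico]; omega
      have := Finset.card_nsmul_le_sum (Finset.Ico m (m + T)) (fun i => X i ω) 1
        (fun i hi => hω i (le_trans hm1 (Finset.mem_Ico.mp hi).1))
      simpa [hcard] using this
    have hBT : B ω ≤ T := Nat.sInf_le hTmem
    have hmemB : T ≤ ∑ i ∈ Finset.Ico m (m + B ω), X i ω :=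
      Nat.sInf_mem (s := {n : ℕ | T ≤ ∑ i ∈ Finset.Ico m (m + n), X i ω}) ⟨T, hTmem⟩
    have hsub : Finset.Ico m (m + B ω) ⊆ Finset.Icc 1 ((m - 1) + B ω) := by
      intro i hi
      rw [Finset.mem_Ico] at hi
      rw [Finset.mem_Icc]
      omega
    have hsumle : ∑ i ∈ Finset.Ico m (m + B ω), X i ω
        ≤ ∑ i ∈ Finset.Icc 1 ((m - 1) + B ω), X i ω :=
      Finset.sum_le_sum_of_subset hsub
    refine ⟨?_, hBT⟩
    rw [hA ω]
    exact Nat.sInf_le (le_trans hmemB hsumle)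
  -- a.e. bound on the μ' side
  have hA'good : ∀ᵐ ω ∂μ', A' ω ≤ T ∧
      ∀ n : ℕ, ∑ i ∈ Finset.Icc 1 n, X' i ω < T → n < A' ω := by
    filter_upwards [hgood'] with ω hω
    have hTmem : T ∈ {n : ℕ | T ≤ ∑ i ∈ Finset.Icc 1 n, X' i ω} := by
      have hcard : (Finset.Icc 1 T).card = T := by
        rw [Nat.card_Icc]; omega
      have := Finset.card_nsmul_le_sum (Finset.Icc 1 T) (fun i => X' i ω) 1
        (fun i hi => hω i (Finset.mem_Icc.mp hi).1)
      simpa [hcard] using this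
    constructor
    · rw [hA' ω]; exact Nat.sInf_le hTmem
    · intro n hn
      by_contra hle
      push_neg at hle
      have hmem : T ≤ ∑ i ∈ Finset.Icc 1 (A' ω), X' i ω := by
        have := Nat.sInf_mem (s := {n : ℕ | T ≤ ∑ i ∈ Finset.Icc 1 n, X' i ω}) ⟨T, hTmem⟩
        rw [← hA' ω] at this
        exact this
      have hsub : Finset.Icc 1 (A' ω) ⊆ Finset.Icc 1 n := by
        intro i hi; rw [Finset.mem_Icc] at hi ⊢; omega
      have h5 : ∑ i ∈ Finset.Icc 1 (A' ω), X' i ω ≤ ∑ i ∈ Finset.Icc 1 n, X' i ω :=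
        Finset.sum_le_sum_of_subset hsub
      omega
  -- tail probability comparison
  have htail : ∀ n : ℕ, μ {ω | n < B ω} ≤ μ' {ω | n < A' ω} := by
    intro n
    have hstep1 : μ {ω | n < B ω} ≤ μ {ω | ∑ i ∈ Finset.Ico m (m + n), X i ω < T} := by
      refine measure_mono fun ω hω => ?_
      simp only [Set.mem_setOf_eq] at hω ⊢
      by_contra hc
      push_neg at hc
      have : B ω ≤ n := Nat.sInf_le hc
      omega
    have hstep3 : μ' {ω | ∑ i ∈ Finset.Icc 1 n, X' i ω < T} ≤ μ' {ω | n < A' ω} := by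
      have hsub : ∀ᵐ ω ∂μ', ω ∈ {ω | ∑ i ∈ Finset.Icc 1 n, X' i ω < T} → ω ∈ {ω | n < A' ω} := by
        filter_upwards [hA'good] with ω hω hmem
        exact hω.2 n hmem
      exact measure_mono_ae hsub
    exact le_trans hstep1 (le_trans (key n T) hstep3)
  -- lintegral chain
  have hBle : ∫⁻ ω, (B ω : ENNReal) ∂μ ≤ ∫⁻ ω, (A' ω : ENNReal) ∂μ' := by
    rw [geomAux_lintegral_nat μ B hBmeas, geomAux_lintegral_nat μ' A' hA'meas]
    exact ENNReal.tsum_le_tsum htail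
  have h1 : ∫⁻ ω, (A ω : ENNReal) ∂μ
      ≤ ((m - 1 : ℕ) : ENNReal) + ∫⁻ ω, (B ω : ENNReal) ∂μ := by
    calc ∫⁻ ω, (A ω : ENNReal) ∂μ
        ≤ ∫⁻ ω, (((m - 1 : ℕ) : ENNReal) + (B ω : ENNReal)) ∂μ := by
          refine lintegral_mono_ae (hABae.mono fun ω hω => ?_)
          have : ((A ω : ℕ) : ENNReal) ≤ (((m - 1) + B ω : ℕ) : ENNReal) :=
            Nat.cast_le.mpr hω.1
          simpa [Nat.cast_add] using this
      _ = ((m - 1 : ℕ) : ENNReal) * μ Set.univ + ∫⁻ ω, (B ω : ENNReal) ∂μ := by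
          rw [lintegral_add_left measurable_const, lintegral_const]
      _ = ((m - 1 : ℕ) : ENNReal) + ∫⁻ ω, (B ω : ENNReal) ∂μ := by
          rw [measure_univ, mul_one]
  have hA'fin : ∫⁻ ω, (A' ω : ENNReal) ∂μ' ≤ (T : ENNReal) := by
    calc ∫⁻ ω, (A' ω : ENNReal) ∂μ'
        ≤ ∫⁻ _, (T : ENNReal) ∂μ' := by
          refine lintegral_mono_ae (hA'good.mono fun ω hω => ?_)
          exact Nat.cast_le.mpr hω.1
      _ = (T : ENNReal) := by rw [lintegral_const, measure_univ, mul_one]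
  have hA'ne : ∫⁻ ω, (A' ω : ENNReal) ∂μ' ≠ ⊤ :=
    ne_top_of_le_ne_top (by simp) hA'fin
  have hchain : ∫⁻ ω, (A ω : ENNReal) ∂μ
      ≤ ((m - 1 : ℕ) : ENNReal) + ∫⁻ ω, (A' ω : ENNReal) ∂μ' :=
    h1.trans (add_le_add_right hBle _)
  -- Bochner conversion
  have hAint : ∫ ω, (A ω : ℝ) ∂μ = (∫⁻ ω, (A ω : ENNReal) ∂μ).toReal := by
    rw [integral_eq_lintegral_of_nonneg_ae
      (Eventually.of_forall fun ω => by exact Nat.cast_nonneg (A ω))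
      ((show Measurable fun ω => (A ω : ℝ) from
        measurable_from_top.comp hAmeas).aestronglyMeasurable)]
    congr 1
    exact lintegral_congr fun ω => by rw [ENNReal.ofReal_natCast]
  have hA'int : ∫ ω, (A' ω : ℝ) ∂μ' = (∫⁻ ω, (A' ω : ENNReal) ∂μ').toReal := by
    rw [integral_eq_lintegral_of_nonneg_ae
      (Eventually.of_forall fun ω => by exact Nat.cast_nonneg (A' ω))
      ((show Measurable fun ω => (A' ω : ℝ) from
        measurable_from_top.comp hA'meas).aestronglyMeasurable)]
    congr 1
    exact lintegral_congr fun ω => by rw [ENNReal.ofReal_natCast]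
  rw [hAint, hA'int]
  calc (∫⁻ ω, (A ω : ENNReal) ∂μ).toReal
      ≤ (((m - 1 : ℕ) : ENNReal) + ∫⁻ ω, (A' ω : ENNReal) ∂μ').toReal := by
        refine ENNReal.toReal_mono ?_ hchain
        exact ENNReal.add_ne_top.mpr ⟨by simp, hA'ne⟩
    _ = ((m - 1 : ℕ) : ℝ) + (∫⁻ ω, (A' ω : ENNReal) ∂μ').toReal := by
        rw [ENNReal.toReal_add (by simp) hA'ne, ENNReal.toReal_natCast]
    _ = ((m : ℝ) - 1) + (∫⁻ ω, (A' ω : ENNReal) ∂μ').toReal := by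
        rw [Nat.cast_sub hm1]
        norm_num
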